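/- arXiv:1009.2175 — 3 statements merged into one kernel-verified Lean document; each statement's English description precedes it below -/
import Mathlib

section
/- For probability measures α and β on a measurable space with α absolutely continuous with respect to β, the relative entropy H(α|β) := ∫ (dα/dβ) log(dα/dβ) dβ satisfies the variational formula H(α|β) = sup over bounded measurable functions φ of (∫ φ dα − log ∫ e^φ dβ). -/
open MeasureTheory Real Filter Topology

private lemma gibbs_pointwise (x y : ℝ) (hx : 0 ≤ x) (hy : 0 < y) :
    x - y ≤ x * Real.log x - x * Real.log y := by
  rcases hx.eq_or_lt with h | h
  · simp [← h]; linarith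
  · have hlog := Real.log_le_sub_one_of_pos (show 0 < y / x by positivity)
    rw [Real.log_div hy.ne' h.ne'] at hlog
    have := mul_le_mul_of_nonneg_left hlog hx
    rw [mul_sub] at this
    have hxy : x * (y / x) = y := by field_simp
    nlinarith

private lemma clamp_abs_le (t : ℝ) (n : ℕ) :
    |min (max t (-(n : ℝ))) (n : ℝ)| ≤ |t| := by
  have hn : (0 : ℝ) ≤ n := Nat.cast_nonneg n
  rcases le_total t 0 with ht | ht
  · have h1 : max t (-(n : ℝ)) ≤ 0 := max_le ht (by linarith)
    rw [min_eq_left (h1.trans hn), abs_of_nonpos h1, abs_of_nonpos ht]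
    have : t ≤ max t (-(n : ℝ)) := le_max_left _ _
    linarith
  · have h1 : max t (-(n : ℝ)) = t := max_eq_left (by linarith)
    rw [h1, abs_of_nonneg ht, abs_of_nonneg (le_min ht hn)]
    exact min_le_left _ _

private lemma tendsto_clamp (t : ℝ) :
    Tendsto (fun n : ℕ => min (max t (-(n : ℝ))) (n : ℝ)) atTop (𝓝 t) := by
  apply tendsto_const_nhds.congr'
  filter_upwards [eventually_ge_atTop ⌈|t|⌉₊] with n hn
  have habs : |t| ≤ (n : ℝ) := le_trans (Nat.le_ceil _) (Nat.cast_le.2 hn)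
  obtain ⟨h1, h2⟩ := abs_le.1 habs
  rw [max_eq_left h1, min_eq_left h2]

/-- The relative entropy `H(α|β) = ∫ (dα/dβ) log(dα/dβ) dβ` of probability measures
with `α ≪ β` equals the supremum over bounded measurable `φ` of
`∫ φ dα − log ∫ e^φ dβ`. -/
theorem relative_entropy_variational_formula
    {X : Type*} [MeasurableSpace X] (α β : Measure X)
    [IsProbabilityMeasure α] [IsProbabilityMeasure β]
    (hac : α ≪ β)
    (hint : Integrable
      (fun x => (α.rnDeriv β x).toReal * Real.log (α.rnDeriv β x).toReal) β) :
    ∫ x, (α.rnDeriv β x).toReal * Real.log (α.rnDeriv β x).toReal ∂β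
      = sSup {y : ℝ | ∃ φ : X → ℝ, Measurable φ ∧ (∃ C : ℝ, ∀ x, |φ x| ≤ C) ∧
          y = ∫ x, φ x ∂α - Real.log (∫ x, Real.exp (φ x) ∂β)} := by
  set f : X → ℝ := fun x => (α.rnDeriv β x).toReal with hf_def
  set H : ℝ := ∫ x, f x * Real.log (f x) ∂β with hH_def
  set S : Set ℝ := {y : ℝ | ∃ φ : X → ℝ, Measurable φ ∧ (∃ C : ℝ, ∀ x, |φ x| ≤ C) ∧
          y = ∫ x, φ x ∂α - Real.log (∫ x, Real.exp (φ x) ∂β)} with hS_def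
  have hf_meas : Measurable f := (Measure.measurable_rnDeriv α β).ennreal_toReal
  have hf_nonneg : ∀ x, 0 ≤ f x := fun x => ENNReal.toReal_nonneg
  have hf_int : Integrable f β := Measure.integrable_toReal_rnDeriv
  have hf_intone : ∫ x, f x ∂β = 1 := by
    rw [hf_def, Measure.integral_toReal_rnDeriv hac]
    simp
  -- Part 1: every element of S is ≤ H
  have h_ub : ∀ y ∈ S, y ≤ H := by
    rintro y ⟨φ, hφm, ⟨C, hC⟩, rfl⟩
    set Z : ℝ := ∫ x, Real.exp (φ x) ∂β with hZ_def
    have hexp_int : Integrable (fun x => Real.exp (φ x)) β := by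
      refine Integrable.mono' (integrable_const (Real.exp C)) hφm.exp.aestronglyMeasurable
        (ae_of_all _ fun x => ?_)
      rw [Real.norm_eq_abs, abs_of_nonneg (Real.exp_nonneg _)]
      exact Real.exp_le_exp.2 ((abs_le.1 (hC x)).2)
    have hZ_pos : 0 < Z := by
      have h1 : Real.exp (-C) ≤ Z := by
        have := integral_mono (integrable_const (Real.exp (-C))) hexp_int
          (fun x => Real.exp_le_exp.2 ((abs_le.1 (hC x)).1))
        simpa using this
      linarith [Real.exp_pos (-C)]
    -- pointwise Gibbs inequality
    have h_pt : ∀ x, f x - Real.exp (φ x) / Z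
        ≤ f x * Real.log (f x) - f x * (φ x - Real.log Z) := by
      intro x
      have := gibbs_pointwise (f x) (Real.exp (φ x) / Z) (hf_nonneg x)
        (div_pos (Real.exp_pos _) hZ_pos)
      rwa [Real.log_div (Real.exp_ne_zero _) hZ_pos.ne', Real.log_exp] at this
    have h_int_fφ : Integrable (fun x => f x * (φ x - Real.log Z)) β := by
      refine Integrable.mono' (hf_int.const_mul (C + |Real.log Z|))
        (hf_meas.mul (hφm.sub measurable_const)).aestronglyMeasurable
        (ae_of_all _ fun x => ?_)
      rw [Real.norm_eq_abs, abs_mul, abs_of_nonneg (hf_nonneg x), mul_comm]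
      refine mul_le_mul_of_nonneg_right ?_ (hf_nonneg x)
      calc |φ x - Real.log Z| ≤ |φ x| + |Real.log Z| := abs_sub _ _
        _ ≤ C + |Real.log Z| := by linarith [hC x]
    have h_left : Integrable (fun x => f x - Real.exp (φ x) / Z) β :=
      hf_int.sub (hexp_int.div_const Z)
    have h_right : Integrable (fun x => f x * Real.log (f x) - f x * (φ x - Real.log Z)) β :=
      hint.sub h_int_fφ
    have h_integral := integral_mono h_left h_right h_pt
    rw [integral_sub hf_int (hexp_int.div_const Z), integral_sub hint h_int_fφ] at h_integral
    have h1 : ∫ x, Real.exp (φ x) / Z ∂β = 1 := by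
      rw [integral_div, ← hZ_def, div_self hZ_pos.ne']
    have h2 : ∫ x, f x * (φ x - Real.log Z) ∂β = ∫ x, φ x ∂α - Real.log Z := by
      have := integral_rnDeriv_smul (μ := α) (ν := β) hac (f := fun x => φ x - Real.log Z)
      simp only [smul_eq_mul] at this
      rw [hf_def]
      rw [this, integral_sub (Integrable.mono' (integrable_const C) hφm.aestronglyMeasurable
        (ae_of_all _ fun x => by rw [Real.norm_eq_abs]; exact hC x)) (integrable_const _)]
      simp
    rw [hf_intone, h1, h2] at h_integral
    linarith
  have h_ne : S.Nonempty := by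
    refine ⟨0, fun _ => 0, measurable_const, ⟨0, by simp⟩, ?_⟩
    simp
  have h_bdd : BddAbove S := ⟨H, h_ub⟩
  -- Part 2: H is a limit of elements of S
  -- positivity a.e. w.r.t. α
  have h_pos_ae : ∀ᵐ x ∂α, 0 < f x := by
    filter_upwards [Measure.rnDeriv_pos hac, hac.ae_le (Measure.rnDeriv_lt_top α β)]
      with x h1 h2
    exact ENNReal.toReal_pos h1.ne' h2.ne
  have hlog_int : Integrable (fun x => Real.log (f x)) α := by
    rw [← MeasureTheory.integrable_rnDeriv_smul_iff (μ := α) (ν := β) hac]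
    simpa [smul_eq_mul] using hint
  have hH_eq : H = ∫ x, Real.log (f x) ∂α := by
    rw [hH_def, ← integral_rnDeriv_smul (μ := α) (ν := β) hac (f := fun x => Real.log (f x))]
    simp [smul_eq_mul, hf_def]
  set g : ℕ → X → ℝ := fun n x => min (max (f x) (Real.exp (-(n : ℝ)))) (Real.exp (n : ℝ))
    with hg_def
  have hg_pos : ∀ n x, 0 < g n x := fun n x =>
    lt_min (lt_max_of_lt_right (Real.exp_pos _)) (Real.exp_pos _)
  have hg_meas : ∀ n, Measurable (g n) := fun n =>
    (hf_meas.max measurable_const).min measurable_const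
  -- log (g n x) as clamp of log (f x) when f x > 0
  have hlog_g : ∀ n x, 0 < f x →
      Real.log (g n x) = min (max (Real.log (f x)) (-(n : ℝ))) (n : ℝ) := by
    intro n x hx
    have h1 : g n x = Real.exp (min (max (Real.log (f x)) (-(n : ℝ))) (n : ℝ)) := by
      rw [Real.exp_strictMono.monotone.map_min, Real.exp_strictMono.monotone.map_max,
        Real.exp_log hx]
    rw [h1, Real.log_exp]
  have hg_abs_log : ∀ n x, |Real.log (g n x)| ≤ (n : ℝ) := by
    intro n x
    rw [abs_le]
    constructor
    · calc (-(n:ℝ)) = Real.log (Real.exp (-(n:ℝ))) := (Real.log_exp _).symm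
        _ ≤ Real.log (g n x) := Real.log_le_log (Real.exp_pos _)
            (le_min (le_max_right _ _) (by rw [Real.exp_le_exp]; linarith [Nat.cast_nonneg (α := ℝ) n]))
    · calc Real.log (g n x) ≤ Real.log (Real.exp (n:ℝ)) :=
            Real.log_le_log (hg_pos n x) (min_le_right _ _)
        _ = (n : ℝ) := Real.log_exp _
  -- ∫ g n dβ → 1
  have h_tend_int_g : Tendsto (fun n => ∫ x, g n x ∂β) atTop (𝓝 1) := by
    rw [← hf_intone]
    refine tendsto_integral_of_dominated_convergence (fun x => f x + 1)
      (fun n => (hg_meas n).aestronglyMeasurable) (hf_int.add (integrable_const 1))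
      (fun n => ae_of_all _ fun x => ?_) (ae_of_all _ fun x => ?_)
    · rw [Real.norm_eq_abs, abs_of_pos (hg_pos n x)]
      calc g n x ≤ max (f x) (Real.exp (-(n : ℝ))) := min_le_left _ _
        _ ≤ f x + 1 := max_le (by linarith [hf_nonneg x])
            (by linarith [hf_nonneg x,
              Real.exp_le_one_iff.2 (neg_nonpos.2 (Nat.cast_nonneg (α := ℝ) n))])
    · -- pointwise convergence g n x → f x
      have h1 : Tendsto (fun n : ℕ => Real.exp (-(n : ℝ))) atTop (𝓝 0) :=
        Real.tendsto_exp_atBot.comp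
          (tendsto_neg_atBot_iff.2 (tendsto_natCast_atTop_atTop))
      have h2 : Tendsto (fun n : ℕ => max (f x) (Real.exp (-(n : ℝ)))) atTop (𝓝 (f x)) := by
        have := Tendsto.max (tendsto_const_nhds : Tendsto (fun _ : ℕ => f x) atTop (𝓝 (f x))) h1
        rwa [max_eq_left (hf_nonneg x)] at this
      refine h2.congr' ?_
      have h3 : Tendsto (fun n : ℕ => Real.exp ((n : ℝ))) atTop atTop :=
        Real.tendsto_exp_atTop.comp tendsto_natCast_atTop_atTop
      filter_upwards [h3.eventually_ge_atTop (f x + 1)] with n hn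
      rw [hg_def]
      refine (min_eq_left ?_).symm
      refine max_le (by linarith) ?_
      calc Real.exp (-(n:ℝ)) ≤ 1 :=
            Real.exp_le_one_iff.2 (neg_nonpos.2 (Nat.cast_nonneg (α := ℝ) n))
        _ ≤ f x + 1 := by linarith [hf_nonneg x]
        _ ≤ Real.exp ((n : ℝ)) := hn
  -- ∫ log (g n) dα → ∫ log f dα = H
  have h_tend_int_log : Tendsto (fun n => ∫ x, Real.log (g n x) ∂α) atTop
      (𝓝 (∫ x, Real.log (f x) ∂α)) := by
    refine tendsto_integral_of_dominated_convergence (fun x => |Real.log (f x)|)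
      (fun n => ((hg_meas n).log).aestronglyMeasurable) hlog_int.abs
      (fun n => ?_) ?_
    · filter_upwards [h_pos_ae] with x hx
      rw [Real.norm_eq_abs, hlog_g n x hx]
      exact clamp_abs_le _ _
    · filter_upwards [h_pos_ae] with x hx
      have : (fun n : ℕ => Real.log (g n x))
          = fun n : ℕ => min (max (Real.log (f x)) (-(n : ℝ))) (n : ℝ) := by
        funext n; exact hlog_g n x hx
      rw [this]
      exact tendsto_clamp _
  -- the sequence of elements of S
  have h_mem : ∀ n : ℕ, (∫ x, Real.log (g n x) ∂α - Real.log (∫ x, g n x ∂β)) ∈ S := by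
    intro n
    refine ⟨fun x => Real.log (g n x), (hg_meas n).log, ⟨(n : ℝ), hg_abs_log n⟩, ?_⟩
    have hexp : ∀ x, Real.exp (Real.log (g n x)) = g n x := fun x => Real.exp_log (hg_pos n x)
    simp only [hexp]
  have h_tend : Tendsto (fun n => ∫ x, Real.log (g n x) ∂α - Real.log (∫ x, g n x ∂β))
      atTop (𝓝 H) := by
    have hlog1 : Tendsto (fun n => Real.log (∫ x, g n x ∂β)) atTop (𝓝 0) := by
      have hc : ContinuousAt Real.log 1 := Real.continuousAt_log one_ne_zero
      have := hc.tendsto.comp h_tend_int_g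
      simpa [Function.comp_def] using this
    have := (h_tend_int_log.sub hlog1)
    rwa [sub_zero, ← hH_eq] at this
  refine le_antisymm ?_ (csSup_le h_ne h_ub)
  exact le_of_tendsto h_tend (Eventually.of_forall fun n => le_csSup h_bdd (h_mem n))
end

section
/- Let α, β be probability measures with α ≪ β and let A be a measurable set with β(A) > 0. Then α(A) ≤ (log 2 + H(α|β)) / log(1 + 1/β(A)). -/
open MeasureTheory Real

lemma aux_integral_llr_nonneg {X : Type*} [MeasurableSpace X] (μ ν : Measure X)
    [IsProbabilityMeasure μ] [IsProbabilityMeasure ν] (h : μ ≪ ν)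
    (hint : Integrable (MeasureTheory.llr μ ν) μ) :
    0 ≤ ∫ x, MeasureTheory.llr μ ν x ∂μ := by
  have h_eq : (fun x ↦ exp (- llr μ ν x)) =ᵐ[μ] fun x ↦ (ν.rnDeriv μ x).toReal :=
    exp_neg_llr h
  have hgi : Integrable (fun x ↦ exp (- llr μ ν x)) μ :=
    (integrable_congr h_eq).mpr (Measure.integrable_toReal_rnDeriv)
  have hjen : exp (∫ x, - llr μ ν x ∂μ) ≤ ∫ x, exp (- llr μ ν x) ∂μ :=
    convexOn_exp.map_integral_le continuous_exp.continuousOn isClosed_univ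
      (Filter.Eventually.of_forall fun _ ↦ Set.mem_univ _) hint.neg hgi
  have hle1 : ∫ x, exp (- llr μ ν x) ∂μ ≤ 1 := by
    rw [integral_congr_ae h_eq]
    calc ∫ x, (ν.rnDeriv μ x).toReal ∂μ
        = ∫ x in Set.univ, (ν.rnDeriv μ x).toReal ∂μ := by rw [setIntegral_univ]
      _ ≤ (ν Set.univ).toReal := Measure.setIntegral_toReal_rnDeriv_le (measure_ne_top ν _)
      _ = 1 := by simp
  have : exp (∫ x, - llr μ ν x ∂μ) ≤ 1 := hjen.trans hle1
  rw [exp_le_one_iff, integral_neg, neg_nonpos] at this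
  exact this

/-- For probability measures `α ≪ β` and a measurable set `A` with `β(A) > 0`,
`α(A) ≤ (log 2 + H(α|β)) / log(1 + 1/β(A))`, where
`H(α|β) = ∫ log(dα/dβ) dα` is the relative entropy. -/
theorem entropy_set_bound
    {X : Type*} [MeasurableSpace X] (α β : Measure X)
    [IsProbabilityMeasure α] [IsProbabilityMeasure β]
    (hac : α ≪ β)
    (hH : Integrable (MeasureTheory.llr α β) α)
    (A : Set X) (hA : MeasurableSet A) (hApos : 0 < (β A).toReal) :
    (α A).toReal
      ≤ (Real.log 2 + ∫ x, MeasureTheory.llr α β x ∂α)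
          / Real.log (1 + 1 / (β A).toReal) := by
  set t : ℝ := (β A).toReal with ht
  set σ : ℝ := Real.log (1 + 1 / t) with hσ
  have hσpos : 0 < σ := by
    apply Real.log_pos
    have : 0 < 1 / t := by positivity
    linarith
  set f : X → ℝ := A.indicator (fun _ ↦ σ) with hf
  have hfα : Integrable f α := (integrable_const σ).indicator hA
  have hexpf : (fun x ↦ exp (f x)) = fun x ↦ A.indicator (fun _ ↦ exp σ - 1) x + 1 := by
    funext x
    by_cases hx : x ∈ A <;> simp [hf, hx]
  have hefβ : Integrable (fun x ↦ exp (f x)) β := by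
    rw [hexpf]
    exact ((integrable_const _).indicator hA).add (integrable_const 1)
  have hexpσ : exp σ = 1 + 1 / t := by
    rw [hσ, Real.exp_log]
    have : 0 < 1 / t := by positivity
    linarith
  have hintβ : ∫ x, exp (f x) ∂β = 2 := by
    rw [hexpf]
    rw [integral_add ((integrable_const _).indicator hA) (integrable_const 1)]
    rw [integral_indicator_const _ hA, integral_const]
    simp only [measureReal_def, measure_univ, ENNReal.toReal_one, smul_eq_mul, one_mul]
    rw [hexpσ]
    field_simp
    rw [← ht]; ring
  have hintα : ∫ x, f x ∂α = σ * (α A).toReal := by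
    rw [hf, integral_indicator_const _ hA, smul_eq_mul, mul_comm, measureReal_def]
  -- the tilted measure
  haveI : NeZero β := by infer_instance
  haveI : IsProbabilityMeasure (β.tilted f) := isProbabilityMeasure_tilted hefβ
  have hac' : α ≪ β.tilted f := hac.trans (absolutelyContinuous_tilted hefβ)
  have hint' : Integrable (llr α (β.tilted f)) α :=
    integrable_llr_tilted_right hac hfα hH hefβ
  have h0 : 0 ≤ ∫ x, llr α (β.tilted f) x ∂α :=
    aux_integral_llr_nonneg α (β.tilted f) hac' hint'
  rw [integral_llr_tilted_right hac hfα hefβ hH, hintα, hintβ] at h0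
  rw [le_div_iff₀ hσpos]
  linarith
end

section
/- Relative entropy is superadditive over product reference measures: if β = β₁ ⊗ β₂ is a product probability measure on X₁ × X₂ and α is a probability measure on X₁ × X₂ with marginals α₁, α₂, then H(α₁|β₁) + H(α₂|β₂) ≤ H(α|β). -/
open MeasureTheory Real
open scoped Classical ENNReal

noncomputable section

/-- The relative entropy `H(α|β) = ∫ log(dα/dβ) dα` when `α ≪ β` and the
log-likelihood ratio is integrable, and `+∞` otherwise (`EReal`-valued). -/
def relEntropy {X : Type*} [MeasurableSpace X] (α β : Measure X) : EReal :=
  if α ≪ β ∧ Integrable (MeasureTheory.llr α β) α then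
    ((∫ x, MeasureTheory.llr α β x ∂α : ℝ) : EReal)
  else ⊤

lemma aux_prod_eq_withDensity {X₁ X₂ : Type*} [MeasurableSpace X₁] [MeasurableSpace X₂]
    (α₁ β₁ : Measure X₁) (α₂ β₂ : Measure X₂)
    [SigmaFinite α₁] [SigmaFinite α₂] [SigmaFinite β₁] [SigmaFinite β₂]
    (h₁ : α₁ ≪ β₁) (h₂ : α₂ ≪ β₂) :
    α₁.prod α₂ = (β₁.prod β₂).withDensity
      (fun z => α₁.rnDeriv β₁ z.1 * α₂.rnDeriv β₂ z.2) := by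
  refine Measure.prod_eq fun s t hs ht => ?_
  rw [withDensity_apply _ (hs.prod ht), ← Measure.prod_restrict,
    lintegral_prod_mul (Measure.measurable_rnDeriv _ _).aemeasurable
      (Measure.measurable_rnDeriv _ _).aemeasurable,
    Measure.setLIntegral_rnDeriv h₁, Measure.setLIntegral_rnDeriv h₂]

/-- Superadditivity of relative entropy over product reference measures: if
`β = β₁ ⊗ β₂` and `α` has marginals `α₁, α₂`, then
`H(α₁|β₁) + H(α₂|β₂) ≤ H(α|β)`. -/
theorem relEntropy_superadditive
    {X₁ X₂ : Type*} [MeasurableSpace X₁] [MeasurableSpace X₂]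
    [StandardBorelSpace X₁] [StandardBorelSpace X₂]
    (α : Measure (X₁ × X₂)) [IsProbabilityMeasure α]
    (β₁ : Measure X₁) (β₂ : Measure X₂)
    [IsProbabilityMeasure β₁] [IsProbabilityMeasure β₂] :
    relEntropy (α.map Prod.fst) β₁ + relEntropy (α.map Prod.snd) β₂
      ≤ relEntropy α (β₁.prod β₂) := by
  by_cases h : α ≪ β₁.prod β₂ ∧ Integrable (llr α (β₁.prod β₂)) α
  swap
  · have hT : relEntropy α (β₁.prod β₂) = ⊤ := by rw [relEntropy, if_neg h]
    rw [hT]; exact le_top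
  obtain ⟨hac, hint⟩ := h
  set β : Measure (X₁ × X₂) := β₁.prod β₂ with hβdef
  set α₁ : Measure X₁ := α.map Prod.fst with hα₁def
  set α₂ : Measure X₂ := α.map Prod.snd with hα₂def
  have hP₁ : IsProbabilityMeasure α₁ := Measure.isProbabilityMeasure_map measurable_fst.aemeasurable
  have hP₂ : IsProbabilityMeasure α₂ := Measure.isProbabilityMeasure_map measurable_snd.aemeasurable
  have hac₁ : α₁ ≪ β₁ := by
    have := hac.map measurable_fst
    rwa [Measure.map_fst_prod, measure_univ, one_smul] at this
  have hac₂ : α₂ ≪ β₂ := by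
    have := hac.map measurable_snd
    rwa [Measure.map_snd_prod, measure_univ, one_smul] at this
  -- pullback of a.e. properties along the projections
  have pull₁ : ∀ {p : X₁ → Prop}, MeasurableSet {x | p x} → (∀ᵐ x ∂α₁, p x) →
      (∀ᵐ z ∂α, p z.1) := fun hp h => (ae_map_iff measurable_fst.aemeasurable hp).mp h
  have pull₂ : ∀ {p : X₂ → Prop}, MeasurableSet {x | p x} → (∀ᵐ x ∂α₂, p x) →
      (∀ᵐ z ∂α, p z.2) := fun hp h => (ae_map_iff measurable_snd.aemeasurable hp).mp h
  set γ : Measure (X₁ × X₂) := α₁.prod α₂ with hγdef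
  have hγd : γ = β.withDensity (fun z => α₁.rnDeriv β₁ z.1 * α₂.rnDeriv β₂ z.2) :=
    aux_prod_eq_withDensity α₁ β₁ α₂ β₂ hac₁ hac₂
  have hdens_meas : Measurable (fun z : X₁ × X₂ => α₁.rnDeriv β₁ z.1 * α₂.rnDeriv β₂ z.2) :=
    ((Measure.measurable_rnDeriv _ _).comp measurable_fst).mul
      ((Measure.measurable_rnDeriv _ _).comp measurable_snd)
  have hpos₁ : ∀ᵐ z ∂α, 0 < α₁.rnDeriv β₁ z.1 :=
    pull₁ (measurableSet_lt measurable_const (Measure.measurable_rnDeriv _ _))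
      (Measure.rnDeriv_pos hac₁)
  have hpos₂ : ∀ᵐ z ∂α, 0 < α₂.rnDeriv β₂ z.2 :=
    pull₂ (measurableSet_lt measurable_const (Measure.measurable_rnDeriv _ _))
      (Measure.rnDeriv_pos hac₂)
  have hlt₁ : ∀ᵐ z ∂α, α₁.rnDeriv β₁ z.1 < ∞ :=
    pull₁ (measurableSet_lt (Measure.measurable_rnDeriv _ _) measurable_const)
      (hac₁.ae_le (Measure.rnDeriv_lt_top α₁ β₁))
  have hlt₂ : ∀ᵐ z ∂α, α₂.rnDeriv β₂ z.2 < ∞ :=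
    pull₂ (measurableSet_lt (Measure.measurable_rnDeriv _ _) measurable_const)
      (hac₂.ae_le (Measure.rnDeriv_lt_top α₂ β₂))
  -- α is absolutely continuous wrt the product of its marginals
  have hacγ : α ≪ γ := by
    refine Measure.AbsolutelyContinuous.mk fun s hs hγs => ?_
    rw [hγd, withDensity_apply _ hs] at hγs
    have h0 : ∀ᵐ z ∂(β.restrict s), α₁.rnDeriv β₁ z.1 * α₂.rnDeriv β₂ z.2 = 0 :=
      (lintegral_eq_zero_iff hdens_meas).mp hγs
    rw [ae_restrict_iff' hs] at h0
    have h0' := hac.ae_le h0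
    have : ∀ᵐ z ∂α, z ∉ s := by
      filter_upwards [h0', hpos₁, hpos₂] with z hz h1 h2 hmem
      exact (ENNReal.mul_pos h1.ne' h2.ne').ne' (hz hmem)
    exact measure_eq_zero_iff_ae_notMem.mpr this
  -- density of γ wrt β
  have hdγβ : ∀ᵐ z ∂α, γ.rnDeriv β z = α₁.rnDeriv β₁ z.1 * α₂.rnDeriv β₂ z.2 := by
    refine hac.ae_le ?_
    rw [hγd]
    exact Measure.rnDeriv_withDensity β hdens_meas
  -- chain rule
  have hchain : ∀ᵐ z ∂α, α.rnDeriv γ z * γ.rnDeriv β z = α.rnDeriv β z := by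
    have := Measure.rnDeriv_mul_rnDeriv (κ := β) hacγ
    filter_upwards [hac.ae_le this] with z hz using hz
  have hpos_αγ : ∀ᵐ z ∂α, 0 < α.rnDeriv γ z := Measure.rnDeriv_pos hacγ
  have hlt_αγ : ∀ᵐ z ∂α, α.rnDeriv γ z < ∞ := hacγ.ae_le (Measure.rnDeriv_lt_top α γ)
  have hpos_γα : ∀ᵐ z ∂α, 0 < γ.rnDeriv α z := Measure.rnDeriv_pos' hacγ
  have hlt_γα : ∀ᵐ z ∂α, γ.rnDeriv α z < ∞ := Measure.rnDeriv_lt_top γ α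
  -- key pointwise identity
  set L : X₁ × X₂ → ℝ := fun z => llr α₁ β₁ z.1 + llr α₂ β₂ z.2 with hLdef
  have hkey : ∀ᵐ z ∂α, llr α β z = llr α γ z + L z := by
    filter_upwards [hchain, hdγβ, hpos_αγ, hlt_αγ, hpos₁, hpos₂, hlt₁, hlt₂]
      with z h1 h2 h3 h4 h5 h6 h7 h8
    have e1 : (α.rnDeriv β z).toReal
        = (α.rnDeriv γ z).toReal * ((α₁.rnDeriv β₁ z.1).toReal * (α₂.rnDeriv β₂ z.2).toReal) := by
      rw [← h1, h2, ENNReal.toReal_mul, ENNReal.toReal_mul]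
    have n1 : (α.rnDeriv γ z).toReal ≠ 0 := by
      simp [ENNReal.toReal_ne_zero, h3.ne', h4.ne]
    have n2 : (α₁.rnDeriv β₁ z.1).toReal ≠ 0 := by
      simp [ENNReal.toReal_ne_zero, h5.ne', h7.ne]
    have n3 : (α₂.rnDeriv β₂ z.2).toReal ≠ 0 := by
      simp [ENNReal.toReal_ne_zero, h6.ne', h8.ne]
    simp only [llr, hLdef]
    rw [e1, log_mul n1 (mul_ne_zero n2 n3), log_mul n2 n3]
  have hneg : ∀ᵐ z ∂α, llr α γ z = - llr γ α z := by
    filter_upwards [neg_llr hacγ] with z hz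
    rw [← hz]; simp
  have hL_eq : ∀ᵐ z ∂α, L z = llr α β z + llr γ α z := by
    filter_upwards [hkey, hneg] with z h1 h2
    rw [h1, h2]; ring
  -- integrable bounds
  have hg_int : Integrable (fun z => (γ.rnDeriv α z).toReal) α :=
    Measure.integrable_toReal_rnDeriv
  have hγα_le : ∀ᵐ z ∂α, llr γ α z ≤ (γ.rnDeriv α z).toReal - 1 := by
    filter_upwards [hpos_γα, hlt_γα] with z h1 h2
    exact log_le_sub_one_of_pos (ENNReal.toReal_pos h1.ne' h2.ne)
  have hm₁_int : Integrable (fun z : X₁ × X₂ => (β₁.rnDeriv α₁ z.1).toReal) α := by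
    have h : Integrable (fun x => (β₁.rnDeriv α₁ x).toReal) α₁ :=
      Measure.integrable_toReal_rnDeriv
    rw [hα₁def] at h
    exact (integrable_map_measure
      (Measure.measurable_rnDeriv _ _).ennreal_toReal.aestronglyMeasurable
      measurable_fst.aemeasurable).mp h
  have hm₂_int : Integrable (fun z : X₁ × X₂ => (β₂.rnDeriv α₂ z.2).toReal) α := by
    have h : Integrable (fun x => (β₂.rnDeriv α₂ x).toReal) α₂ :=
      Measure.integrable_toReal_rnDeriv
    rw [hα₂def] at h
    exact (integrable_map_measure
      (Measure.measurable_rnDeriv _ _).ennreal_toReal.aestronglyMeasurable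
      measurable_snd.aemeasurable).mp h
  have hm₁ : ∀ᵐ x ∂α₁, 1 - (β₁.rnDeriv α₁ x).toReal ≤ llr α₁ β₁ x := by
    filter_upwards [neg_llr hac₁, Measure.rnDeriv_pos' hac₁, Measure.rnDeriv_lt_top β₁ α₁]
      with x h1 h2 h3
    have : llr β₁ α₁ x ≤ (β₁.rnDeriv α₁ x).toReal - 1 :=
      log_le_sub_one_of_pos (ENNReal.toReal_pos h2.ne' h3.ne)
    have h1' : - llr α₁ β₁ x = llr β₁ α₁ x := h1
    linarith
  have hm₂ : ∀ᵐ x ∂α₂, 1 - (β₂.rnDeriv α₂ x).toReal ≤ llr α₂ β₂ x := by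
    filter_upwards [neg_llr hac₂, Measure.rnDeriv_pos' hac₂, Measure.rnDeriv_lt_top β₂ α₂]
      with x h1 h2 h3
    have : llr β₂ α₂ x ≤ (β₂.rnDeriv α₂ x).toReal - 1 :=
      log_le_sub_one_of_pos (ENNReal.toReal_pos h2.ne' h3.ne)
    have h1' : - llr α₂ β₂ x = llr β₂ α₂ x := h1
    linarith
  have hm₁α : ∀ᵐ z ∂α, 1 - (β₁.rnDeriv α₁ z.1).toReal ≤ llr α₁ β₁ z.1 :=
    pull₁ (measurableSet_le
      ((measurable_const.sub (Measure.measurable_rnDeriv _ _).ennreal_toReal))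
      (measurable_llr _ _)) hm₁
  have hm₂α : ∀ᵐ z ∂α, 1 - (β₂.rnDeriv α₂ z.2).toReal ≤ llr α₂ β₂ z.2 :=
    pull₂ (measurableSet_le
      ((measurable_const.sub (Measure.measurable_rnDeriv _ _).ennreal_toReal))
      (measurable_llr _ _)) hm₂
  -- integrability of L
  have hLmeas : AEStronglyMeasurable L α :=
    (((measurable_llr _ _).comp measurable_fst).add
      ((measurable_llr _ _).comp measurable_snd)).aestronglyMeasurable
  have hL_le : ∀ᵐ z ∂α, L z ≤ llr α β z + ((γ.rnDeriv α z).toReal - 1) := by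
    filter_upwards [hL_eq, hγα_le] with z h1 h2
    rw [h1]; linarith
  have hL_ge : ∀ᵐ z ∂α,
      (1 - (β₁.rnDeriv α₁ z.1).toReal) + (1 - (β₂.rnDeriv α₂ z.2).toReal) ≤ L z := by
    filter_upwards [hm₁α, hm₂α] with z h1 h2
    exact add_le_add h1 h2
  have hL_int : Integrable L α := by
    refine integrable_of_le_of_le hLmeas hL_ge hL_le ?_ ?_
    · exact ((integrable_const (1:ℝ)).sub hm₁_int).add ((integrable_const (1:ℝ)).sub hm₂_int)
    · exact hint.add (hg_int.sub (integrable_const 1))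
  -- integrability of the two marginal llr's
  have h1_int : Integrable (fun z : X₁ × X₂ => llr α₁ β₁ z.1) α := by
    refine integrable_of_le_of_le
      ((measurable_llr _ _).comp measurable_fst).aestronglyMeasurable
      hm₁α ?_ ((integrable_const (1:ℝ)).sub hm₁_int)
      (hL_int.sub ((integrable_const (1:ℝ)).sub hm₂_int))
    filter_upwards [hm₂α] with z h2
    have hz : L z = llr α₁ β₁ z.1 + llr α₂ β₂ z.2 := rfl
    simp only [Pi.sub_apply]
    linarith [hz]
  have h2_int : Integrable (fun z : X₁ × X₂ => llr α₂ β₂ z.2) α := by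
    refine integrable_of_le_of_le
      ((measurable_llr _ _).comp measurable_snd).aestronglyMeasurable
      hm₂α ?_ ((integrable_const (1:ℝ)).sub hm₂_int)
      (hL_int.sub ((integrable_const (1:ℝ)).sub hm₁_int))
    filter_upwards [hm₁α] with z h1
    have hz : L z = llr α₁ β₁ z.1 + llr α₂ β₂ z.2 := rfl
    simp only [Pi.sub_apply]
    linarith [hz]
  have hint₁ : Integrable (llr α₁ β₁) α₁ := by
    rw [hα₁def]
    exact (integrable_map_measure (measurable_llr _ _).aestronglyMeasurable
      measurable_fst.aemeasurable).mpr h1_int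
  have hint₂ : Integrable (llr α₂ β₂) α₂ := by
    rw [hα₂def]
    exact (integrable_map_measure (measurable_llr _ _).aestronglyMeasurable
      measurable_snd.aemeasurable).mpr h2_int
  -- integrability of llr γ α and its non-positive integral
  have hγα_int : Integrable (llr γ α) α := by
    refine (hL_int.sub hint).congr ?_
    filter_upwards [hL_eq] with z hz
    show L z - llr α β z = llr γ α z
    linarith [hz]
  have hγα_nonpos : ∫ z, llr γ α z ∂α ≤ 0 := by
    have hle : ∫ z, llr γ α z ∂α ≤ ∫ z, ((γ.rnDeriv α z).toReal - 1) ∂α :=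
      integral_mono_ae hγα_int (hg_int.sub (integrable_const 1)) hγα_le
    have heq : ∫ z, ((γ.rnDeriv α z).toReal - 1) ∂α
        = ∫ z, (γ.rnDeriv α z).toReal ∂α - 1 := by
      rw [integral_sub hg_int (integrable_const 1)]
      simp
    have hub : ∫ z, (γ.rnDeriv α z).toReal ∂α ≤ 1 := by
      have h := Measure.setIntegral_toReal_rnDeriv_le (μ := γ) (ν := α) (s := Set.univ)
        (measure_ne_top _ _)
      rw [setIntegral_univ] at h
      simpa [measure_univ] using h
    linarith
  -- conclude
  have hsum : ∫ z, L z ∂α ≤ ∫ z, llr α β z ∂α := by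
    have : ∫ z, L z ∂α = ∫ z, llr α β z ∂α + ∫ z, llr γ α z ∂α := by
      rw [← integral_add hint hγα_int]
      exact integral_congr_ae hL_eq
    linarith
  have hmarg : ∫ x, llr α₁ β₁ x ∂α₁ + ∫ y, llr α₂ β₂ y ∂α₂ = ∫ z, L z ∂α := by
    rw [hα₁def, hα₂def,
      integral_map measurable_fst.aemeasurable
        (by rw [← hα₁def]; exact (measurable_llr _ _).aestronglyMeasurable),
      integral_map measurable_snd.aemeasurable
        (by rw [← hα₂def]; exact (measurable_llr _ _).aestronglyMeasurable),
      ← integral_add h1_int h2_int]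
  have e0 : relEntropy α β = ((∫ z, llr α β z ∂α : ℝ) : EReal) := by
    rw [relEntropy, if_pos ⟨hac, hint⟩]
  have e1 : relEntropy α₁ β₁ = ((∫ x, llr α₁ β₁ x ∂α₁ : ℝ) : EReal) := by
    rw [relEntropy, if_pos ⟨hac₁, hint₁⟩]
  have e2 : relEntropy α₂ β₂ = ((∫ y, llr α₂ β₂ y ∂α₂ : ℝ) : EReal) := by
    rw [relEntropy, if_pos ⟨hac₂, hint₂⟩]
  rw [show relEntropy (α.map Prod.fst) β₁ = relEntropy α₁ β₁ from rfl,
    show relEntropy (α.map Prod.snd) β₂ = relEntropy α₂ β₂ from rfl,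
    show relEntropy α (β₁.prod β₂) = relEntropy α β from rfl,
    e0, e1, e2, ← EReal.coe_add]
  exact EReal.coe_le_coe_iff.mpr (le_of_eq_of_le hmarg hsum)

end
end
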